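/- Let F be a field, V a finite-dimensional F-vector space, W a linear subspace of V, and T an arbitrary linear subspace of End(V). Let T^⊥ denote the orthogonal complement of T with respect to the nondegenerate symmetric bilinear form (u,v) ↦ tr(u∘v) on End(V). Then dim(T ∩ Hom(V,W)) + dim{u|_W : u ∈ T^⊥} = (dim W)·(dim V), where Hom(V,W) is identified with the space of endomorphisms of V whose range lies in W, and u|_W ∈ Hom(W,V) is the restriction of u to W. -/

import Mathlib

open LinearMap Module

section aux

variable {F M N : Type*} [Field F] [AddCommGroup M] [Module F M] [AddCommGroup N] [Module F N]
  [FiniteDimensional F M] [FiniteDimensional F N]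

/-- nondegeneracy of the trace pairing between Hom(M,N) and Hom(N,M) -/
lemma trace_pairing_inj (b : M →ₗ[F] N) (h : ∀ a : N →ₗ[F] M, trace F N (b ∘ₗ a) = 0) :
    b = 0 := by
  ext x
  rw [LinearMap.zero_apply]
  rw [← Module.forall_dual_apply_eq_zero_iff F]
  intro g
  have := h (dualTensorHom F N M (g ⊗ₜ x))
  have hcomp : b ∘ₗ dualTensorHom F N M (g ⊗ₜ x) = dualTensorHom F N N (g ⊗ₜ (b x)) := by
    ext y; simp
  rw [hcomp, trace_eq_contract_apply] at this
  simpa using this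

end aux

section main

variable {F V : Type*} [Field F] [AddCommGroup V] [Module F V] [FiniteDimensional F V]

/-- the pairing map End V → (End V)* given by trace -/
noncomputable def tracePhi (F V : Type*) [Field F] [AddCommGroup V] [Module F V] :
    (V →ₗ[F] V) →ₗ[F] Module.Dual F (V →ₗ[F] V) :=
  (LinearMap.llcomp F V V V).compr₂ (trace F V)

lemma tracePhi_apply (u v : V →ₗ[F] V) : tracePhi F V u v = trace F V (u ∘ₗ v) := rfl

lemma tracePhi_inj : Function.Injective (tracePhi F V) := by
  rw [← LinearMap.ker_eq_bot, eq_bot_iff]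
  intro u hu
  simp only [LinearMap.mem_ker] at hu
  have : ∀ v : V →ₗ[F] V, trace F V (u ∘ₗ v) = 0 := fun v => by
    have := congrArg (fun f => f v) hu; simpa [tracePhi_apply] using this
  exact trace_pairing_inj u this

lemma perp_eq_comap (T : Submodule F (V →ₗ[F] V)) :
    (⨅ v ∈ T, LinearMap.ker ((LinearMap.trace F V) ∘ₗ (LinearMap.lcomp F V v)))
      = Submodule.comap (tracePhi F V) T.dualAnnihilator := by
  ext u
  simp [Submodule.mem_iInf, Submodule.mem_dualAnnihilator, tracePhi_apply, trace]
  rfl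

lemma finrank_perp (T : Submodule F (V →ₗ[F] V)) :
    finrank F ↥(⨅ v ∈ T, LinearMap.ker ((LinearMap.trace F V) ∘ₗ (LinearMap.lcomp F V v)))
      + finrank F T = finrank F V * finrank F V := by
  rw [perp_eq_comap]
  set e : (V →ₗ[F] V) ≃ₗ[F] Module.Dual F (V →ₗ[F] V) :=
    LinearMap.linearEquivOfInjective (tracePhi F V) tracePhi_inj
      (by rw [Subspace.dual_finrank_eq]) with he
  have hphi : tracePhi F V = (e : (V →ₗ[F] V) →ₗ[F] Module.Dual F (V →ₗ[F] V)) := rfl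
  rw [hphi, Submodule.comap_equiv_eq_map_symm, LinearEquiv.finrank_map_eq]
  have h1 : finrank F ↥T.dualAnnihilator = finrank F (((V →ₗ[F] V)) ⧸ T) :=
    (Subspace.quotEquivAnnihilator T).symm.finrank_eq
  rw [h1, Submodule.finrank_quotient_add_finrank, Module.finrank_linearMap]

lemma perp_sup (T T' : Submodule F (V →ₗ[F] V)) :
    (⨅ v ∈ (T ⊔ T'), LinearMap.ker ((LinearMap.trace F V) ∘ₗ (LinearMap.lcomp F V v)))
      = (⨅ v ∈ T, LinearMap.ker ((LinearMap.trace F V) ∘ₗ (LinearMap.lcomp F V v)))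
        ⊓ (⨅ v ∈ T', LinearMap.ker ((LinearMap.trace F V) ∘ₗ (LinearMap.lcomp F V v))) := by
  rw [perp_eq_comap, perp_eq_comap, perp_eq_comap, Submodule.dualAnnihilator_sup_eq,
    Submodule.comap_inf]

lemma range_j (W : Submodule F V) :
    LinearMap.range (((LinearMap.llcomp F V W V) W.subtype : (V →ₗ[F] W) →ₗ[F] V →ₗ[F] V))
      = LinearMap.ker ((LinearMap.llcomp F V V (V ⧸ W)) W.mkQ) := by
  ext u
  simp only [LinearMap.mem_range, LinearMap.mem_ker, LinearMap.llcomp_apply]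
  constructor
  · rintro ⟨b, rfl⟩
    ext x
    simp [Submodule.Quotient.mk_eq_zero]
  · intro hu
    have hx : ∀ x, u x ∈ W := fun x => by
      have := congrArg (fun f => f x) hu
      simpa [Submodule.Quotient.mk_eq_zero] using this
    exact ⟨u.codRestrict W hx, by ext x; rfl⟩

lemma finrank_H (W : Submodule F V) :
    finrank F ↥(LinearMap.ker (((LinearMap.llcomp F V V (V ⧸ W)) W.mkQ :
      (V →ₗ[F] V) →ₗ[F] V →ₗ[F] V ⧸ W)))
      = finrank F W * finrank F V := by
  rw [← range_j]
  have hinj : Function.Injective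
      ((LinearMap.llcomp F V W V) W.subtype : (V →ₗ[F] W) →ₗ[F] V →ₗ[F] V) := by
    intro a b hab
    ext x
    exact congrArg (fun f => f x) hab
  rw [LinearMap.finrank_range_of_inj hinj, Module.finrank_linearMap, Nat.mul_comm]

lemma perp_H (W : Submodule F V) :
    (⨅ v ∈ LinearMap.ker ((LinearMap.llcomp F V V (V ⧸ W)) W.mkQ),
        LinearMap.ker ((LinearMap.trace F V) ∘ₗ (LinearMap.lcomp F V v)))
      = LinearMap.ker (LinearMap.lcomp F V W.subtype) := by
  ext u
  simp only [Submodule.mem_iInf, LinearMap.mem_ker, LinearMap.coe_comp, Function.comp_apply,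
    LinearMap.lcomp_apply']
  constructor
  · intro h
    apply trace_pairing_inj
    intro a
    have hmem : (W.subtype ∘ₗ a) ∈
        LinearMap.ker ((LinearMap.llcomp F V V (V ⧸ W)) W.mkQ) := by
      rw [← range_j]; exact ⟨a, rfl⟩
    have := h _ hmem
    rwa [LinearMap.comp_assoc]
  · intro h v hv
    have hv' : v ∈ LinearMap.ker ((LinearMap.llcomp F V V (V ⧸ W)) W.mkQ) := hv
    rw [← range_j] at hv'
    obtain ⟨b, rfl⟩ := hv' 
    have hb : ((LinearMap.llcomp F V (↥W) V) W.subtype) b = W.subtype ∘ₗ b := rfl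
    rw [hb, ← LinearMap.comp_assoc, h, LinearMap.zero_comp, map_zero]

lemma finrank_map_inf_ker {M N : Type*} [AddCommGroup M] [Module F M] [AddCommGroup N]
    [Module F N] [FiniteDimensional F M] (f : M →ₗ[F] N) (p : Submodule F M) :
    finrank F ↥(Submodule.map f p) + finrank F ↥(p ⊓ LinearMap.ker f) = finrank F p := by
  have h := LinearMap.finrank_range_add_finrank_ker (f.domRestrict p)
  rw [LinearMap.range_domRestrict, LinearMap.ker_domRestrict] at h
  rw [← h, ← Submodule.finrank_map_subtype_eq p (Submodule.comap p.subtype (LinearMap.ker f)),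
    Submodule.map_comap_subtype]

end main

theorem stmt_2 {F V : Type*} [Field F] [AddCommGroup V] [Module F V]
    [FiniteDimensional F V]
    (T : Submodule F (V →ₗ[F] V)) (W : Submodule F V) :
    Module.finrank F
        ↥(T ⊓ LinearMap.ker ((LinearMap.llcomp F V V (V ⧸ W)) W.mkQ))
      + Module.finrank F
          ↥(Submodule.map (LinearMap.lcomp F V W.subtype)
              (⨅ v ∈ T, LinearMap.ker
                ((LinearMap.trace F V) ∘ₗ (LinearMap.lcomp F V v))))
      = Module.finrank F W * Module.finrank F V := by
  set H := LinearMap.ker (((LinearMap.llcomp F V V (V ⧸ W)) W.mkQ :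
    (V →ₗ[F] V) →ₗ[F] V →ₗ[F] V ⧸ W)) with hH
  set P := (⨅ v ∈ T, LinearMap.ker
      ((LinearMap.trace F V) ∘ₗ (LinearMap.lcomp F V v))) with hP
  set r := LinearMap.lcomp F V W.subtype with hr
  have e1 : finrank F ↥(Submodule.map r P) + finrank F ↥(P ⊓ LinearMap.ker r)
      = finrank F ↥P := finrank_map_inf_ker r P
  have e2 : P ⊓ LinearMap.ker r
      = (⨅ v ∈ (T ⊔ H), LinearMap.ker ((LinearMap.trace F V) ∘ₗ (LinearMap.lcomp F V v))) := by
    rw [perp_sup, hP, hr, perp_H]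
  have e3 : finrank F ↥(⨅ v ∈ (T ⊔ H), LinearMap.ker
        ((LinearMap.trace F V) ∘ₗ (LinearMap.lcomp F V v)))
      + finrank F ↥(T ⊔ H) = finrank F V * finrank F V := finrank_perp (T ⊔ H)
  have e4 : finrank F ↥P + finrank F ↥T = finrank F V * finrank F V := finrank_perp T
  have e5 : finrank F ↥(T ⊔ H) + finrank F ↥(T ⊓ H)
      = finrank F ↥T + finrank F ↥H := Submodule.finrank_sup_add_finrank_inf_eq T H
  have e6 : finrank F ↥H = finrank F W * finrank F V := finrank_H W
  rw [e2] at e1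
  omega
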